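/- arXiv:2405.12113 — 2 statements merged into one kernel-verified Lean document; each statement's English description precedes it below -/
import Mathlib

section
/- Let Ω ⊆ ℝⁿ, δ ∈ (0, n], and let f, g : Ω → [0, ∞] be arbitrary (not necessarily measurable) functions. If p, q > 1 with 1/p + 1/q = 1, then ∫_Ω f(x) g(x) dH^δ_∞ ≤ 2 (∫_Ω f(x)^p dH^δ_∞)^{1/p} (∫_Ω g(x)^q dH^δ_∞)^{1/q} (Hölder's inequality for Choquet integrals). -/
open Metric Set ENNReal MeasureTheory

/-- The δ-dimensional Hausdorff content of a set `E ⊆ ℝⁿ`: the infimum of `∑ rᵢ^δ`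
over all countable covers of `E` by open balls `B(xᵢ, rᵢ)`. -/
noncomputable def hContent (n : ℕ) (δ : ℝ) (E : Set (EuclideanSpace ℝ (Fin n))) : ℝ≥0∞ :=
  ⨅ (c : ℕ → EuclideanSpace ℝ (Fin n)) (r : ℕ → NNReal)
    (_ : E ⊆ ⋃ i, Metric.ball (c i) (r i)), ∑' i, (r i : ℝ≥0∞) ^ δ

/-- The Choquet integral `∫_Ω f dH^δ_∞ = ∫_0^∞ H^δ_∞({x ∈ Ω : f x > t}) dt`. -/
noncomputable def choquet (n : ℕ) (δ : ℝ) (Ω : Set (EuclideanSpace ℝ (Fin n)))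
    (f : EuclideanSpace ℝ (Fin n) → ℝ≥0∞) : ℝ≥0∞ :=
  ∫⁻ t in Set.Ioi (0 : ℝ), hContent n δ {x | x ∈ Ω ∧ ENNReal.ofReal t < f x}

lemma hContent_mono {n : ℕ} {δ : ℝ} {E F : Set (EuclideanSpace ℝ (Fin n))} (h : E ⊆ F) :
    hContent n δ E ≤ hContent n δ F := by
  refine le_iInf fun c => le_iInf fun r => le_iInf fun hc => ?_
  exact iInf_le_of_le c (iInf_le_of_le r (iInf_le_of_le (h.trans hc) le_rfl))

lemma hContent_empty {n : ℕ} {δ : ℝ} (hδ : 0 < δ) :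
    hContent n δ (∅ : Set (EuclideanSpace ℝ (Fin n))) = 0 := by
  refine le_antisymm ?_ (zero_le)
  have : hContent n δ (∅ : Set (EuclideanSpace ℝ (Fin n))) ≤
      ∑' _ : ℕ, ((0 : NNReal) : ℝ≥0∞) ^ δ := by
    refine iInf_le_of_le (fun _ => 0) (iInf_le_of_le (fun _ => 0)
      (iInf_le_of_le (empty_subset _) le_rfl))
  simpa [ENNReal.zero_rpow_of_pos hδ] using this

lemma hContent_iUnion_le (n : ℕ) {δ : ℝ} (hδ : 0 < δ)
    (E : ℕ → Set (EuclideanSpace ℝ (Fin n))) :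
    hContent n δ (⋃ i, E i) ≤ ∑' i, hContent n δ (E i) := by
  by_cases htop : ∑' i, hContent n δ (E i) = ⊤
  · simp [htop]
  refine ENNReal.le_of_forall_pos_le_add fun ε hε _ => ?_
  obtain ⟨δs, hδs, hδssum⟩ := ENNReal.exists_pos_sum_of_countable
    (ε := (ε : ℝ≥0∞)) (by exact_mod_cast hε.ne') ℕ
  have hfin : ∀ i, hContent n δ (E i) ≠ ⊤ :=
    fun i => ne_top_of_le_ne_top htop (ENNReal.le_tsum i)
  have key : ∀ i, ∃ (c : ℕ → EuclideanSpace ℝ (Fin n)) (r : ℕ → NNReal),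
      (E i ⊆ ⋃ j, Metric.ball (c j) (r j)) ∧
      ∑' j, ((r j : ℝ≥0∞)) ^ δ < hContent n δ (E i) + δs i := by
    intro i
    have hlt : hContent n δ (E i) < hContent n δ (E i) + δs i :=
      ENNReal.lt_add_right (hfin i) (by exact_mod_cast (hδs i).ne')
    conv_lhs at hlt => rw [hContent]
    simpa only [iInf_lt_iff, exists_prop] using hlt
  choose c r hcov hsum using key
  set e : ℕ ≃ ℕ × ℕ := (Denumerable.eqv (ℕ × ℕ)).symm with he
  set C : ℕ → EuclideanSpace ℝ (Fin n) := fun k => c (e k).1 (e k).2 with hC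
  set R : ℕ → NNReal := fun k => r (e k).1 (e k).2 with hR
  have hcover : (⋃ i, E i) ⊆ ⋃ k, Metric.ball (C k) (R k) := by
    intro x hx
    obtain ⟨i, hi⟩ := mem_iUnion.1 hx
    obtain ⟨j, hj⟩ := mem_iUnion.1 (hcov i hi)
    refine mem_iUnion.2 ⟨e.symm (i, j), ?_⟩
    simp only [hC, hR, Equiv.apply_symm_apply]
    exact hj
  have hle : hContent n δ (⋃ i, E i) ≤ ∑' k, ((R k : ℝ≥0∞)) ^ δ :=
    iInf_le_of_le C (iInf_le_of_le R (iInf_le_of_le hcover le_rfl))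
  refine hle.trans ?_
  have h1 : ∑' k, ((R k : ℝ≥0∞)) ^ δ = ∑' ij : ℕ × ℕ, ((r ij.1 ij.2 : ℝ≥0∞)) ^ δ :=
    e.tsum_eq (fun ij => ((r ij.1 ij.2 : ℝ≥0∞)) ^ δ)
  rw [h1, ENNReal.tsum_prod (f := fun i j => ((r i j : ℝ≥0∞)) ^ δ)]
  calc ∑' i, ∑' j, ((r i j : ℝ≥0∞)) ^ δ
      ≤ ∑' i, (hContent n δ (E i) + δs i) := Summable.tsum_le_tsum (fun i => (hsum i).le)
        ENNReal.summable ENNReal.summable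
    _ = ∑' i, hContent n δ (E i) + ∑' i, (δs i : ℝ≥0∞) := ENNReal.tsum_add
    _ ≤ ∑' i, hContent n δ (E i) + ε := add_le_add_right hδssum.le _

lemma hContent_union_le (n : ℕ) {δ : ℝ} (hδ : 0 < δ)
    (A B : Set (EuclideanSpace ℝ (Fin n))) :
    hContent n δ (A ∪ B) ≤ hContent n δ A + hContent n δ B := by
  set E : ℕ → Set (EuclideanSpace ℝ (Fin n)) := fun i =>
    if i = 0 then A else if i = 1 then B else ∅ with hE
  have h1 : A ∪ B ⊆ ⋃ i, E i := by
    rintro x (hx | hx)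
    · exact mem_iUnion.2 ⟨0, by simp [hE, hx]⟩
    · exact mem_iUnion.2 ⟨1, by simp [hE, hx]⟩
  have h2 : ∑' i, hContent n δ (E i) = hContent n δ A + hContent n δ B := by
    rw [tsum_eq_sum (s := {0, 1}) (fun i hi => ?_)]
    · simp [hE]
    · have hi0 : i ≠ 0 := by simp at hi; exact hi.1
      have hi1 : i ≠ 1 := by simp at hi; exact hi.2
      simp [hE, hi0, hi1, hContent_empty hδ]
  calc hContent n δ (A ∪ B) ≤ hContent n δ (⋃ i, E i) := hContent_mono h1
    _ ≤ ∑' i, hContent n δ (E i) := hContent_iUnion_le n hδ E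
    _ = _ := h2

lemma antitone_level (n : ℕ) (δ : ℝ) (Ω : Set (EuclideanSpace ℝ (Fin n)))
    (F : EuclideanSpace ℝ (Fin n) → ℝ≥0∞) :
    Antitone (fun s : ℝ => hContent n δ {x | x ∈ Ω ∧ ENNReal.ofReal s < F x}) :=
  fun s t hst => hContent_mono fun x hx =>
    ⟨hx.1, lt_of_le_of_lt (ENNReal.ofReal_le_ofReal hst) hx.2⟩

lemma level_zero_of_integral_zero {ψ : ℝ → ℝ≥0∞} (hψ : Antitone ψ)
    (h : ∫⁻ t in Set.Ioi (0 : ℝ), ψ t = 0) {s : ℝ} (hs : 0 < s) : ψ s = 0 := by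
  by_contra h0
  have hpos : 0 < ψ s := pos_iff_ne_zero.2 h0
  have h1 : ∫⁻ t in Set.Ioc (0 : ℝ) s, ψ s ≤ ∫⁻ t in Set.Ioc (0 : ℝ) s, ψ t :=
    setLIntegral_mono' measurableSet_Ioc (fun t ht => hψ ht.2)
  have h2 : ∫⁻ t in Set.Ioc (0 : ℝ) s, ψ t ≤ ∫⁻ t in Set.Ioi (0 : ℝ), ψ t :=
    lintegral_mono_set Ioc_subset_Ioi_self
  rw [h, nonpos_iff_eq_zero] at h2
  rw [setLIntegral_const, Real.volume_Ioc, sub_zero] at h1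
  have h3 : ψ s * ENNReal.ofReal s = 0 := le_antisymm (h2 ▸ h1) (zero_le)
  rcases mul_eq_zero.1 h3 with h4 | h4
  · exact h0 h4
  · exact absurd h4 (by simp [ENNReal.ofReal_eq_zero, not_le, hs])

lemma lintegral_Ioi_comp_mul (φ : ℝ → ℝ≥0∞) {k : ℝ} (hk : 0 < k) :
    ∫⁻ t in Set.Ioi (0 : ℝ), φ (k * t) =
      ENNReal.ofReal k⁻¹ * ∫⁻ s in Set.Ioi (0 : ℝ), φ s := by
  have hemb : MeasurableEmbedding (fun t : ℝ => k * t) :=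
    (Homeomorph.mulLeft₀ k hk.ne').measurableEmbedding
  have hpre : (fun t : ℝ => k * t) ⁻¹' Set.Ioi 0 = Set.Ioi 0 := by
    ext t
    simp [Set.mem_preimage, Set.mem_Ioi, mul_pos_iff_of_pos_left, hk]
  have hmap : Measure.map (fun t : ℝ => k * t) (volume.restrict (Set.Ioi (0:ℝ))) =
      ENNReal.ofReal k⁻¹ • volume.restrict (Set.Ioi (0:ℝ)) := by
    conv_lhs => rw [← hpre]
    rw [← Measure.restrict_map hemb.measurable measurableSet_Ioi,
      Real.map_volume_mul_left hk.ne', Measure.restrict_smul,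
      abs_of_pos (inv_pos.2 hk)]
  calc ∫⁻ t in Set.Ioi (0 : ℝ), φ (k * t)
      = ∫⁻ y, φ y ∂(Measure.map (fun t : ℝ => k * t) (volume.restrict (Set.Ioi (0:ℝ)))) :=
        (hemb.lintegral_map φ).symm
    _ = ENNReal.ofReal k⁻¹ * ∫⁻ s in Set.Ioi (0 : ℝ), φ s := by
        rw [hmap, lintegral_smul_measure, smul_eq_mul]

/-- Hölder's inequality for Choquet integrals with respect to Hausdorff content. -/
theorem choquet_holder (n : ℕ) (hn : 1 ≤ n) (δ : ℝ) (hδ0 : 0 < δ) (hδn : δ ≤ n)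
    (Ω : Set (EuclideanSpace ℝ (Fin n))) (f g : EuclideanSpace ℝ (Fin n) → ℝ≥0∞)
    (p q : ℝ) (hp : 1 < p) (hq : 1 < q) (hpq : 1 / p + 1 / q = 1) :
    choquet n δ Ω (fun x => f x * g x) ≤
      2 * (choquet n δ Ω (fun x => f x ^ p)) ^ (1 / p) *
        (choquet n δ Ω (fun x => g x ^ q)) ^ (1 / q) := by
  have hp0 : (0:ℝ) < p := lt_trans one_pos hp
  have hq0 : (0:ℝ) < q := lt_trans one_pos hq
  set ψ : ℝ → ℝ≥0∞ := fun t => hContent n δ {x | x ∈ Ω ∧ ENNReal.ofReal t < f x * g x}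
    with hψdef
  set ψF : ℝ → ℝ≥0∞ := fun s => hContent n δ {x | x ∈ Ω ∧ ENNReal.ofReal s < f x ^ p}
    with hψFdef
  set ψG : ℝ → ℝ≥0∞ := fun s => hContent n δ {x | x ∈ Ω ∧ ENNReal.ofReal s < g x ^ q}
    with hψGdef
  have haψ : Antitone ψ := antitone_level n δ Ω _
  have haψF : Antitone ψF := antitone_level n δ Ω _
  have haψG : Antitone ψG := antitone_level n δ Ω _
  have hCF : choquet n δ Ω (fun x => f x ^ p) = ∫⁻ s in Set.Ioi (0:ℝ), ψF s := rfl
  have hCG : choquet n δ Ω (fun x => g x ^ q) = ∫⁻ s in Set.Ioi (0:ℝ), ψG s := rfl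
  have hL : choquet n δ Ω (fun x => f x * g x) = ∫⁻ t in Set.Ioi (0:ℝ), ψ t := rfl
  set CF := choquet n δ Ω (fun x => f x ^ p) with hCFdef
  set CG := choquet n δ Ω (fun x => g x ^ q) with hCGdef
  -- key bound for arbitrary k > 0
  have key : ∀ k : ℝ, 0 < k →
      choquet n δ Ω (fun x => f x * g x) ≤
        ENNReal.ofReal k⁻¹ * CF + ENNReal.ofReal (k ^ (q/p)) * CG := by
    intro k hk
    set k2 : ℝ := k ^ (-(q/p)) with hk2def
    have hk2 : 0 < k2 := Real.rpow_pos_of_pos hk _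
    have hptw : ∀ t ∈ Set.Ioi (0:ℝ), ψ t ≤ ψF (k * t) + ψG (k2 * t) := by
      intro t ht
      have hincl : {x | x ∈ Ω ∧ ENNReal.ofReal t < f x * g x} ⊆
          {x | x ∈ Ω ∧ ENNReal.ofReal (k * t) < f x ^ p} ∪
          {x | x ∈ Ω ∧ ENNReal.ofReal (k2 * t) < g x ^ q} := by
        rintro x ⟨hxΩ, hxlt⟩
        by_contra hcon
        rw [Set.mem_union] at hcon
        push_neg at hcon
        obtain ⟨h1, h2⟩ := hcon
        have hf : f x ^ p ≤ ENNReal.ofReal (k * t) := not_lt.1 fun hlt => (h1 ⟨hxΩ, hlt⟩).elim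
        have hg : g x ^ q ≤ ENNReal.ofReal (k2 * t) := not_lt.1 fun hlt => (h2 ⟨hxΩ, hlt⟩).elim
        have ht0 : (0:ℝ) < t := ht
        have hf' : f x ≤ ENNReal.ofReal ((k * t) ^ (1/p)) := by
          have := ENNReal.rpow_le_rpow hf (one_div_pos.2 hp0).le
          rwa [← ENNReal.rpow_mul, mul_one_div_cancel hp0.ne', ENNReal.rpow_one,
            ENNReal.ofReal_rpow_of_pos (mul_pos hk ht0)] at this
        have hg' : g x ≤ ENNReal.ofReal ((k2 * t) ^ (1/q)) := by
          have := ENNReal.rpow_le_rpow hg (one_div_pos.2 hq0).le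
          rwa [← ENNReal.rpow_mul, mul_one_div_cancel hq0.ne', ENNReal.rpow_one,
            ENNReal.ofReal_rpow_of_pos (mul_pos hk2 ht0)] at this
        have hmul : f x * g x ≤ ENNReal.ofReal t := by
          have hpne : p ≠ 0 := hp0.ne'
          have hqne : q ≠ 0 := hq0.ne'
          have hreal : (k * t) ^ (1/p) * (k2 * t) ^ (1/q) = t := by
            rw [Real.mul_rpow hk.le ht0.le, Real.mul_rpow hk2.le ht0.le, hk2def,
              ← Real.rpow_mul hk.le]
            have hqp : -(q/p) * (1/q) = -(1/p) := by field_simp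
            rw [hqp]
            calc k ^ (1/p) * t ^ (1/p) * (k ^ (-(1/p)) * t ^ (1/q))
                = (k ^ (1/p) * k ^ (-(1/p))) * (t ^ (1/p) * t ^ (1/q)) := by ring
              _ = 1 * t ^ (1/p + 1/q) := by
                  rw [← Real.rpow_add hk, ← Real.rpow_add ht0, add_neg_cancel,
                    Real.rpow_zero]
              _ = t := by rw [hpq, Real.rpow_one, one_mul]
          calc f x * g x ≤ ENNReal.ofReal ((k * t) ^ (1/p)) *
                ENNReal.ofReal ((k2 * t) ^ (1/q)) := mul_le_mul' hf' hg'
            _ = ENNReal.ofReal ((k * t) ^ (1/p) * (k2 * t) ^ (1/q)) :=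
                (ENNReal.ofReal_mul (Real.rpow_nonneg (mul_pos hk ht0).le _)).symm
            _ = ENNReal.ofReal t := by rw [hreal]
        exact absurd hxlt (not_lt.2 hmul)
      calc ψ t ≤ hContent n δ ({x | x ∈ Ω ∧ ENNReal.ofReal (k * t) < f x ^ p} ∪
            {x | x ∈ Ω ∧ ENNReal.ofReal (k2 * t) < g x ^ q}) := hContent_mono hincl
        _ ≤ ψF (k * t) + ψG (k2 * t) := hContent_union_le n hδ0 _ _
    have hmF : Measurable fun t : ℝ => ψF (k * t) :=
      (haψF.comp_monotone (fun a b hab => by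
        exact mul_le_mul_of_nonneg_left hab hk.le) : Antitone _).measurable
    have hmG : Measurable fun t : ℝ => ψG (k2 * t) :=
      (haψG.comp_monotone (fun a b hab => by
        exact mul_le_mul_of_nonneg_left hab hk2.le) : Antitone _).measurable
    calc choquet n δ Ω (fun x => f x * g x)
        = ∫⁻ t in Set.Ioi (0:ℝ), ψ t := hL
      _ ≤ ∫⁻ t in Set.Ioi (0:ℝ), (ψF (k * t) + ψG (k2 * t)) :=
          setLIntegral_mono (hmF.add hmG) hptw
      _ = (∫⁻ t in Set.Ioi (0:ℝ), ψF (k * t)) + ∫⁻ t in Set.Ioi (0:ℝ), ψG (k2 * t) :=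
          lintegral_add_left hmF _
      _ = ENNReal.ofReal k⁻¹ * CF + ENNReal.ofReal k2⁻¹ * CG := by
          rw [lintegral_Ioi_comp_mul ψF hk, lintegral_Ioi_comp_mul ψG hk2, hCF, hCG]
      _ = ENNReal.ofReal k⁻¹ * CF + ENNReal.ofReal (k ^ (q/p)) * CG := by
          rw [hk2def, Real.rpow_neg hk.le, inv_inv]
  -- degenerate case: CF = 0 (symmetric to CG = 0)
  have hzero : ∀ (F : EuclideanSpace ℝ (Fin n) → ℝ≥0∞),
      (∀ x, F x = 0 → f x * g x = 0) →
      (∫⁻ s in Set.Ioi (0:ℝ), hContent n δ {x | x ∈ Ω ∧ ENNReal.ofReal s < F x} = 0) →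
      choquet n δ Ω (fun x => f x * g x) = 0 := by
    intro F hvan hF0
    have haF : Antitone (fun s : ℝ => hContent n δ {x | x ∈ Ω ∧ ENNReal.ofReal s < F x}) :=
      antitone_level n δ Ω F
    have hlevel : ∀ s : ℝ, 0 < s →
        hContent n δ {x | x ∈ Ω ∧ ENNReal.ofReal s < F x} = 0 :=
      fun s hs => level_zero_of_integral_zero haF hF0 hs
    have hψ0 : ∀ t : ℝ, 0 < t → ψ t = 0 := by
      intro t ht
      have hincl : {x | x ∈ Ω ∧ ENNReal.ofReal t < f x * g x} ⊆
          ⋃ m : ℕ, {x | x ∈ Ω ∧ ENNReal.ofReal ((m+1:ℝ)⁻¹) < F x} := by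
        rintro x ⟨hxΩ, hxlt⟩
        have hFx : F x ≠ 0 := by
          intro h0
          rw [hvan x h0] at hxlt
          exact absurd hxlt (by simp)
        obtain ⟨m, hm⟩ := ENNReal.exists_inv_nat_lt hFx
        refine mem_iUnion.2 ⟨m, hxΩ, lt_of_le_of_lt ?_ hm⟩
        rw [ENNReal.ofReal_inv_of_pos (by positivity)]
        refine ENNReal.inv_le_inv.2 ?_
        rw [ENNReal.ofReal_add (by positivity) zero_le_one, ENNReal.ofReal_one,
          ENNReal.ofReal_natCast]
        exact le_add_of_nonneg_right zero_le_one
      refine le_antisymm ?_ (zero_le)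
      calc ψ t ≤ hContent n δ (⋃ m : ℕ, {x | x ∈ Ω ∧ ENNReal.ofReal ((m+1:ℝ)⁻¹) < F x}) :=
            hContent_mono hincl
        _ ≤ ∑' m : ℕ, hContent n δ {x | x ∈ Ω ∧ ENNReal.ofReal ((m+1:ℝ)⁻¹) < F x} :=
            hContent_iUnion_le n hδ0 _
        _ = ∑' _ : ℕ, (0:ℝ≥0∞) :=
            tsum_congr fun m => hlevel ((m+1:ℝ)⁻¹) (by positivity)
        _ = 0 := tsum_zero
    rw [hL]
    refine le_antisymm ?_ (zero_le)
    calc ∫⁻ t in Set.Ioi (0:ℝ), ψ t ≤ ∫⁻ _ in Set.Ioi (0:ℝ), 0 :=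
          setLIntegral_mono measurable_const (fun t ht => (hψ0 t ht).le)
      _ = 0 := by simp
  by_cases hCF0 : CF = 0
  · have hvan : ∀ x, f x ^ p = 0 → f x * g x = 0 := by
      intro x hx
      rw [ENNReal.rpow_eq_zero_iff_of_pos hp0] at hx
      rw [hx, zero_mul]
    rw [hzero (fun x => f x ^ p) hvan (by
      show ∫⁻ s in Set.Ioi (0:ℝ), ψF s = 0
      exact hCF.symm.trans hCF0)]
    exact zero_le
  by_cases hCG0 : CG = 0
  · have hvan : ∀ x, g x ^ q = 0 → f x * g x = 0 := by
      intro x hx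
      rw [ENNReal.rpow_eq_zero_iff_of_pos hq0] at hx
      rw [hx, mul_zero]
    rw [hzero (fun x => g x ^ q) hvan (by
      show ∫⁻ s in Set.Ioi (0:ℝ), ψG s = 0
      exact hCG.symm.trans hCG0)]
    exact zero_le
  have hneG : CG ^ (1/q) ≠ 0 := fun h => by
    rcases ENNReal.rpow_eq_zero_iff.1 h with ⟨h1, _⟩ | ⟨_, h2⟩
    · exact hCG0 h1
    · have := one_div_pos.2 hq0; linarith
  have hneF : CF ^ (1/p) ≠ 0 := fun h => by
    rcases ENNReal.rpow_eq_zero_iff.1 h with ⟨h1, _⟩ | ⟨_, h2⟩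
    · exact hCF0 h1
    · have := one_div_pos.2 hp0; linarith
  by_cases hCFt : CF = ⊤
  · have : (2 : ℝ≥0∞) * CF ^ (1/p) * CG ^ (1/q) = ⊤ := by
      rw [hCFt, ENNReal.top_rpow_of_pos (one_div_pos.2 hp0),
        ENNReal.mul_top (by norm_num : (2:ℝ≥0∞) ≠ 0), ENNReal.top_mul hneG]
    rw [this]; exact le_top
  by_cases hCGt : CG = ⊤
  · have : (2 : ℝ≥0∞) * CF ^ (1/p) * CG ^ (1/q) = ⊤ := by
      rw [hCGt, ENNReal.top_rpow_of_pos (one_div_pos.2 hq0),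
        ENNReal.mul_top (mul_ne_zero (by norm_num : (2:ℝ≥0∞) ≠ 0) hneF)]
    rw [this]; exact le_top
  -- main case
  set a : ℝ := CF.toReal with hadef
  set b : ℝ := CG.toReal with hbdef
  have ha : 0 < a := ENNReal.toReal_pos hCF0 hCFt
  have hb : 0 < b := ENNReal.toReal_pos hCG0 hCGt
  set k : ℝ := (a / b) ^ (1/q) with hkdef
  have hk : 0 < k := Real.rpow_pos_of_pos (by positivity) _
  refine (key k hk).trans ?_
  have hCFa : CF = ENNReal.ofReal a := (ENNReal.ofReal_toReal hCFt).symm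
  have hCGb : CG = ENNReal.ofReal b := (ENNReal.ofReal_toReal hCGt).symm
  have hpqsum : 1 - 1/q = 1/p := by linarith
  have hpqsum' : 1 - 1/p = 1/q := by linarith
  have e1 : k⁻¹ * a = a ^ (1/p) * b ^ (1/q) := by
    have h1 : k⁻¹ = b ^ (1/q) / a ^ (1/q) := by
      rw [hkdef, Real.div_rpow ha.le hb.le, inv_div]
    rw [h1, div_mul_eq_mul_div, mul_comm (b ^ (1/q)) a, ← div_mul_eq_mul_div,
      show a / a ^ (1/q) = a ^ (1 - 1/q) from (by rw [Real.rpow_sub ha, Real.rpow_one]),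
      hpqsum, mul_comm]
  have e2 : k ^ (q/p) * b = a ^ (1/p) * b ^ (1/q) := by
    rw [hkdef, ← Real.rpow_mul (by positivity)]
    have : 1/q * (q/p) = 1/p := by field_simp
    rw [this, Real.div_rpow ha.le hb.le, div_mul_eq_mul_div, mul_div_assoc]
    rw [show b / b ^ (1/p) = b ^ (1 - 1/p) by
      rw [Real.rpow_sub hb, Real.rpow_one]]
    rw [hpqsum']
  calc ENNReal.ofReal k⁻¹ * CF + ENNReal.ofReal (k ^ (q/p)) * CG
      = ENNReal.ofReal (k⁻¹ * a) + ENNReal.ofReal (k ^ (q/p) * b) := by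
        rw [hCFa, hCGb, ← ENNReal.ofReal_mul (by positivity),
          ← ENNReal.ofReal_mul (by positivity)]
    _ = ENNReal.ofReal (2 * (a ^ (1/p) * b ^ (1/q))) := by
        rw [e1, e2, ← ENNReal.ofReal_add (by positivity) (by positivity), two_mul]
    _ = 2 * CF ^ (1/p) * CG ^ (1/q) := by
        rw [hCFa, hCGb, ENNReal.ofReal_rpow_of_pos ha, ENNReal.ofReal_rpow_of_pos hb,
          ENNReal.ofReal_mul (by norm_num), ENNReal.ofReal_mul (by positivity),
          ENNReal.ofReal_ofNat, mul_assoc]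
    _ ≤ 2 * CF ^ (1/p) * CG ^ (1/q) := le_rfl
end

section
/- Let n ≥ 1, d ∈ (0, n], κ ∈ (0, d), and 1 < q < d/κ. Then there is a constant c depending only on d such that for any function f : ℝⁿ → [−∞, ∞] and every x ∈ ℝⁿ, M^d_κ f(x) ≤ c ( ∫_{ℝⁿ} |f(y)|^q dH^d_∞(y) )^{κ/d} ( M^d f(x) )^{1 − qκ/d}. -/
open Metric Set ENNReal MeasureTheory

lemma rpow_le_rpow_of_nonpos' {a b : ℝ≥0∞} (hab : a ≤ b) {z : ℝ} (hz : z ≤ 0) :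
    b ^ z ≤ a ^ z := by
  rw [← neg_neg z, ENNReal.rpow_neg b, ENNReal.rpow_neg a]
  exact ENNReal.inv_le_inv.2 (ENNReal.rpow_le_rpow hab (by linarith))

lemma hContent_ball_le {n : ℕ} {d : ℝ} (hd0 : 0 < d) (x : EuclideanSpace ℝ (Fin n)) (r : ℝ) :
    hContent n d (ball x r) ≤ ENNReal.ofReal r ^ d := by
  have hcov : ball x r ⊆ ⋃ i : ℕ,
      ball ((fun _ : ℕ => x) i) (((fun i : ℕ => if i = 0 then r.toNNReal else 0) i : NNReal) : ℝ) := by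
    intro y hy
    refine mem_iUnion.2 ⟨0, ?_⟩
    simp only [if_pos rfl, mem_ball, Real.coe_toNNReal']
    exact lt_max_of_lt_left (mem_ball.1 hy)
  refine le_trans (iInf_le_of_le _ (iInf_le_of_le _ (iInf_le_of_le hcov le_rfl))) ?_
  rw [tsum_eq_single 0 (fun i hi => by
    simp [if_neg hi, ENNReal.zero_rpow_of_pos hd0])]
  simp [ENNReal.ofReal]

lemma le_hContent_ball {n : ℕ} (hn : 1 ≤ n) {d : ℝ} (hd0 : 0 < d) (hdn : d ≤ n)
    (x : EuclideanSpace ℝ (Fin n)) {r : ℝ} (hr : 0 < r) :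
    ENNReal.ofReal r ^ d ≤ hContent n d (ball x r) := by
  haveI : Nontrivial (EuclideanSpace ℝ (Fin n)) := by
    refine nontrivial_of_ne (EuclideanSpace.single ⟨0, by omega⟩ 1) 0 ?_
    intro h
    have := congrArg (fun v => v ⟨0, by omega⟩) h
    simpa using this
  refine le_iInf fun c => le_iInf fun rad => le_iInf fun hcov => ?_
  by_cases hbig : ∃ i, r ≤ (rad i : ℝ)
  · obtain ⟨i, hi⟩ := hbig
    refine le_trans ?_ (ENNReal.le_tsum i)
    refine ENNReal.rpow_le_rpow ?_ hd0.le
    rw [← ENNReal.ofReal_coe_nnreal]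
    exact ENNReal.ofReal_le_ofReal hi
  · push_neg at hbig
    haveI : Nonempty (Fin n) := ⟨⟨0, by omega⟩⟩
    set V := ENNReal.ofReal (Real.sqrt Real.pi ^ (Fintype.card (Fin n)) /
      Real.Gamma ((Fintype.card (Fin n)) / 2 + 1)) with hV
    have hV0 : V ≠ 0 := by
      rw [hV]
      simp only [ne_eq, ENNReal.ofReal_eq_zero, not_le]
      have h1 : (0:ℝ) < Real.sqrt Real.pi ^ (Fintype.card (Fin n)) := by positivity
      have h2 : (0:ℝ) < Real.Gamma ((Fintype.card (Fin n)) / 2 + 1) :=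
        Real.Gamma_pos_of_pos (by positivity)
      positivity
    have hVt : V ≠ ∞ := ENNReal.ofReal_ne_top
    have h1 : volume (ball x r) ≤ ∑' i, volume (ball (c i) (rad i)) :=
      (measure_mono hcov).trans (measure_iUnion_le _)
    rw [EuclideanSpace.volume_ball] at h1
    have h2 : ∀ i, volume (ball (c i) ((rad i : ℝ))) =
        (ENNReal.ofReal (rad i : ℝ)) ^ (Fintype.card (Fin n)) * V := fun i =>
      EuclideanSpace.volume_ball _ _ _
    simp only [h2] at h1
    rw [ENNReal.tsum_mul_right] at h1
    have h3 : (ENNReal.ofReal r) ^ (n : ℝ) ≤ ∑' i, ((rad i : ℝ≥0∞)) ^ (n : ℝ) := by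
      have := (ENNReal.mul_le_mul_iff_left hV0 hVt).1 h1
      simp only [Fintype.card_fin] at this
      simpa only [ENNReal.rpow_natCast, ENNReal.ofReal_coe_nnreal] using this
    set R := ENNReal.ofReal r with hR
    have hR0 : R ≠ 0 := by simpa [hR] using (ENNReal.ofReal_pos.2 hr).ne'
    have hRt : R ≠ ∞ := ENNReal.ofReal_ne_top
    calc R ^ d = R ^ (d - n) * R ^ (n : ℝ) := by
          rw [← ENNReal.rpow_add _ _ hR0 hRt, sub_add_cancel]
      _ ≤ R ^ (d - n) * ∑' i, ((rad i : ℝ≥0∞)) ^ (n : ℝ) := mul_le_mul_right h3 _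
      _ = ∑' i, R ^ (d - n) * ((rad i : ℝ≥0∞)) ^ (n : ℝ) := ENNReal.tsum_mul_left.symm
      _ ≤ ∑' i, ((rad i : ℝ≥0∞)) ^ d := by
          refine ENNReal.tsum_le_tsum fun i => ?_
          rcases eq_or_ne (rad i) 0 with h0 | h0
          · simp [h0, ENNReal.zero_rpow_of_pos (by positivity : (0:ℝ) < (n:ℝ))]
          · have hs0 : ((rad i : ℝ≥0∞)) ≠ 0 := by exact_mod_cast h0
            have hst : ((rad i : ℝ≥0∞)) ≠ ∞ := ENNReal.coe_ne_top
            have hsR : ((rad i : ℝ≥0∞)) ≤ R := by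
              rw [hR, ← ENNReal.ofReal_coe_nnreal]
              exact ENNReal.ofReal_le_ofReal (hbig i).le
            calc R ^ (d - n) * ((rad i : ℝ≥0∞)) ^ (n : ℝ)
                ≤ ((rad i : ℝ≥0∞)) ^ (d - n) * ((rad i : ℝ≥0∞)) ^ (n : ℝ) := by
                  exact mul_le_mul_left (rpow_le_rpow_of_nonpos' hsR (by linarith)) _
              _ = ((rad i : ℝ≥0∞)) ^ d := by
                  rw [← ENNReal.rpow_add _ _ hs0 hst, sub_add_cancel]

lemma hContent_ball_eq {n : ℕ} (hn : 1 ≤ n) {d : ℝ} (hd0 : 0 < d) (hdn : d ≤ n)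
    (x : EuclideanSpace ℝ (Fin n)) {r : ℝ} (hr : 0 < r) :
    hContent n d (ball x r) = ENNReal.ofReal r ^ d :=
  le_antisymm (hContent_ball_le hd0 x r) (le_hContent_ball hn hd0 hdn x hr)

lemma chebyshev {n : ℕ} {d q : ℝ} (hq0 : 0 < q) (f : EuclideanSpace ℝ (Fin n) → EReal)
    {t : ℝ} (ht : 0 < t) :
    ENNReal.ofReal (t ^ q) * hContent n d {x | ENNReal.ofReal t < (f x).abs} ≤
      choquet n d Set.univ (fun y => (f y).abs ^ q) := by
  have key : ∀ s ∈ Ioc (0:ℝ) (t ^ q), hContent n d {x | ENNReal.ofReal t < (f x).abs} ≤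
      hContent n d {x | x ∈ Set.univ ∧ ENNReal.ofReal s < (f x).abs ^ q} := by
    intro s hs
    refine hContent_mono fun y hy => ⟨mem_univ _, ?_⟩
    have h1 : ENNReal.ofReal s ≤ ENNReal.ofReal (t ^ q) := ENNReal.ofReal_le_ofReal hs.2
    have h2 : ENNReal.ofReal (t ^ q) = (ENNReal.ofReal t) ^ q :=
      (ENNReal.ofReal_rpow_of_pos ht).symm
    calc ENNReal.ofReal s ≤ (ENNReal.ofReal t) ^ q := by rw [← h2]; exact h1
      _ < (f y).abs ^ q := ENNReal.rpow_lt_rpow hy hq0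
  calc ENNReal.ofReal (t ^ q) * hContent n d {x | ENNReal.ofReal t < (f x).abs}
      = ∫⁻ _ in Ioc (0:ℝ) (t ^ q), hContent n d {x | ENNReal.ofReal t < (f x).abs} := by
        rw [setLIntegral_const, Real.volume_Ioc, mul_comm]
        norm_num
    _ ≤ ∫⁻ s in Ioc (0:ℝ) (t ^ q),
        hContent n d {x | x ∈ Set.univ ∧ ENNReal.ofReal s < (f x).abs ^ q} :=
        setLIntegral_mono' measurableSet_Ioc key
    _ ≤ choquet n d Set.univ (fun y => (f y).abs ^ q) :=
        lintegral_mono_set (Ioc_subset_Ioi_self)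

/-- The Hausdorff content centred fractional maximal function `M^δ_κ f`. -/
noncomputable def maxF (n : ℕ) (δ κ : ℝ) (f : EuclideanSpace ℝ (Fin n) → EReal)
    (x : EuclideanSpace ℝ (Fin n)) : ℝ≥0∞ :=
  ⨆ (r : ℝ) (_ : 0 < r),
    (ENNReal.ofReal (r ^ κ) / hContent n δ (Metric.ball x r)) *
      choquet n δ (Metric.ball x r) (fun y => (f y).abs)

/-- Pointwise estimate of the fractional maximal function by the maximal function:
for `d ∈ (0, n]`, `κ ∈ (0, d)` and `1 < q < d/κ` there is a constant `c = c(d)` such that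
`M^d_κ f(x) ≤ c (∫_{ℝⁿ} |f|^q dH^d_∞)^{κ/d} (M^d f(x))^{1 - qκ/d}` for any function `f`
and every `x`. -/
theorem maxF_fractional_pointwise (n : ℕ) (hn : 1 ≤ n) (d κ q : ℝ) (hd0 : 0 < d)
    (hdn : d ≤ n) (hκ0 : 0 < κ) (hκd : κ < d) (hq1 : 1 < q) (hq : q < d / κ) :
    ∃ c : ℝ≥0∞, c ≠ ∞ ∧ ∀ (f : EuclideanSpace ℝ (Fin n) → EReal)
      (x : EuclideanSpace ℝ (Fin n)),
      maxF n d κ f x ≤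
        c * (choquet n d Set.univ (fun y => (f y).abs ^ q)) ^ (κ / d) *
          (maxF n d 0 f x) ^ (1 - q * κ / d) := by
  refine ⟨1 + ENNReal.ofReal (1 / (q - 1)),
    ENNReal.add_ne_top.2 ⟨ENNReal.one_ne_top, ENNReal.ofReal_ne_top⟩, ?_⟩
  intro f x
  set c := (1 : ℝ≥0∞) + ENNReal.ofReal (1 / (q - 1)) with hcdef
  set A := choquet n d Set.univ (fun y => (f y).abs ^ q) with hAdef
  set M := maxF n d 0 f x with hMdef
  have hq0 : (0:ℝ) < q := by linarith
  have hc1 : (1:ℝ≥0∞) ≤ c := le_self_add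
  have hcne0 : c ≠ 0 := (lt_of_lt_of_le zero_lt_one hc1).ne'
  have hqκd : q * κ / d < 1 := by
    rw [div_lt_one hd0]
    calc q * κ < (d / κ) * κ := by nlinarith
      _ = d := by field_simp
  have he0 : (0:ℝ) < 1 - q * κ / d := by linarith
  have hβ0 : (0:ℝ) < κ / d := by positivity
  have rpow_ne_zero : ∀ (a : ℝ≥0∞) (z : ℝ), a ≠ 0 → a ≠ ⊤ → a ^ z ≠ 0 := by
    intro a z h1 h2
    simp [ENNReal.rpow_eq_zero_iff, h1, h2]
  have rpow_ne_top : ∀ (a : ℝ≥0∞) (z : ℝ), a ≠ 0 → a ≠ ⊤ → a ^ z ≠ ⊤ := by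
    intro a z h1 h2
    simp [ENNReal.rpow_eq_top_iff, h1, h2]
  have hball : ∀ r : ℝ, 0 < r → hContent n d (ball x r) = ENNReal.ofReal r ^ d :=
    fun r hr => hContent_ball_eq hn hd0 hdn x hr
  have hcheb : ∀ t : ℝ, 0 < t →
      ENNReal.ofReal (t ^ q) * hContent n d {y | ENNReal.ofReal t < (f y).abs} ≤ A :=
    fun t ht => chebyshev hq0 f ht
  have hIM : ∀ r : ℝ, 0 < r →
      choquet n d (ball x r) (fun y => (f y).abs) ≤ M * ENNReal.ofReal r ^ d := by
    intro r hr
    have hle : (ENNReal.ofReal (r ^ (0:ℝ)) / hContent n d (ball x r)) *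
        choquet n d (ball x r) (fun y => (f y).abs) ≤ M := by
      rw [hMdef, maxF]
      exact le_iSup₂ (f := fun (r : ℝ) (_ : 0 < r) =>
        (ENNReal.ofReal (r ^ (0:ℝ)) / hContent n d (ball x r)) *
          choquet n d (ball x r) (fun y => (f y).abs)) r hr
    rw [Real.rpow_zero, ENNReal.ofReal_one, hball r hr] at hle
    have h0 : ENNReal.ofReal r ^ d ≠ 0 :=
      rpow_ne_zero _ _ (ENNReal.ofReal_pos.2 hr).ne' ENNReal.ofReal_ne_top
    have ht : ENNReal.ofReal r ^ d ≠ ∞ :=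
      rpow_ne_top _ _ (ENNReal.ofReal_pos.2 hr).ne' ENNReal.ofReal_ne_top
    rw [one_div, mul_comm, ← div_eq_mul_inv] at hle
    exact (ENNReal.div_le_iff h0 ht).1 hle
  by_cases hA0 : A = 0
  · have hzero : maxF n d κ f x ≤ 0 := by
      rw [maxF]
      refine iSup₂_le fun r hr => ?_
      have hI : choquet n d (ball x r) (fun y => (f y).abs) = 0 := by
        rw [choquet]
        refine le_antisymm ?_ zero_le
        have hpt : ∀ t ∈ Ioi (0:ℝ),
            hContent n d {y | y ∈ ball x r ∧ ENNReal.ofReal t < (f y).abs} ≤ (0:ℝ≥0∞) := by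
          intro t ht
          have h1 : hContent n d {y | ENNReal.ofReal t < (f y).abs} = 0 := by
            have h2 := hcheb t ht
            rw [hA0, le_zero_iff, mul_eq_zero] at h2
            rcases h2 with h2 | h2
            · exact absurd h2 (by
                simp only [ne_eq, ENNReal.ofReal_eq_zero, not_le]
                exact Real.rpow_pos_of_pos (mem_Ioi.1 ht) q)
            · exact h2
          exact le_trans (hContent_mono fun y hy => hy.2) (le_of_eq h1)
        calc ∫⁻ t in Ioi (0:ℝ), hContent n d {y | y ∈ ball x r ∧ ENNReal.ofReal t < (f y).abs}
            ≤ ∫⁻ _ in Ioi (0:ℝ), (0:ℝ≥0∞) := setLIntegral_mono' measurableSet_Ioi hpt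
          _ = 0 := by simp
      rw [hI, mul_zero]
    exact le_trans hzero zero_le
  · by_cases hM0 : M = 0
    · have hzero : maxF n d κ f x ≤ 0 := by
        rw [maxF]
        refine iSup₂_le fun r hr => ?_
        have hI : choquet n d (ball x r) (fun y => (f y).abs) = 0 := by
          have := hIM r hr
          rw [hM0, zero_mul, le_zero_iff] at this
          exact this
        rw [hI, mul_zero]
      exact le_trans hzero zero_le
    · by_cases hAt : A = ⊤
      · have hMe : M ^ (1 - q * κ / d) ≠ 0 := by
          simp only [ne_eq, ENNReal.rpow_eq_zero_iff, not_or]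
          constructor
          · rintro ⟨h, _⟩; exact hM0 h
          · rintro ⟨_, h⟩; linarith
        have hRHS : c * A ^ (κ / d) * M ^ (1 - q * κ / d) = ⊤ := by
          rw [hAt, ENNReal.top_rpow_of_pos hβ0, ENNReal.mul_top hcne0, ENNReal.top_mul hMe]
        rw [hRHS]; exact le_top
      · by_cases hMt : M = ⊤
        · have hAe : A ^ (κ / d) ≠ 0 := rpow_ne_zero _ _ hA0 hAt
          have hRHS : c * A ^ (κ / d) * M ^ (1 - q * κ / d) = ⊤ := by
            rw [hMt, ENNReal.top_rpow_of_pos he0, ENNReal.mul_top (mul_ne_zero hcne0 hAe)]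
          rw [hRHS]; exact le_top
        · -- main case : A, M ∈ (0, ∞)
          have hMq0 : M ^ q ≠ 0 := rpow_ne_zero _ _ hM0 hMt
          have hMqt : M ^ q ≠ ⊤ := rpow_ne_top _ _ hM0 hMt
          rw [maxF]
          refine iSup₂_le fun r hr => ?_
          set R := ENNReal.ofReal r with hRdef
          have hR0 : R ≠ 0 := (ENNReal.ofReal_pos.2 hr).ne'
          have hRt : R ≠ ∞ := ENNReal.ofReal_ne_top
          have hRd0 : R ^ d ≠ 0 := rpow_ne_zero _ _ hR0 hRt
          have hRdt : R ^ d ≠ ⊤ := rpow_ne_top _ _ hR0 hRt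
          rw [hball r hr, show ENNReal.ofReal (r ^ κ) = ENNReal.ofReal r ^ κ from (ENNReal.ofReal_rpow_of_pos hr).symm]
          set I := choquet n d (ball x r) (fun y => (f y).abs) with hIdef
          have hdivR : R ^ κ / R ^ d = R ^ (κ - d) := by
            rw [sub_eq_add_neg, ENNReal.rpow_add _ _ hR0 hRt, ENNReal.rpow_neg,
              div_eq_mul_inv]
          rw [hdivR]
          by_cases hcase : R ^ d * M ^ q ≤ A
          · calc R ^ (κ - d) * I ≤ R ^ (κ - d) * (M * R ^ d) :=
                mul_le_mul_right (hIM r hr) _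
              _ = R ^ κ * M := by
                rw [mul_comm M, ← mul_assoc, ← ENNReal.rpow_add _ _ hR0 hRt, sub_add_cancel]
              _ = (R ^ d) ^ (κ / d) * M := by
                rw [← ENNReal.rpow_mul, mul_div_cancel₀ κ hd0.ne']
              _ ≤ (A / M ^ q) ^ (κ / d) * M := by
                refine mul_le_mul_left (ENNReal.rpow_le_rpow ?_ hβ0.le) M
                exact (ENNReal.le_div_iff_mul_le (Or.inl hMq0) (Or.inl hMqt)).2 hcase
              _ = A ^ (κ / d) * M ^ (1 - q * κ / d) := by
                rw [ENNReal.div_rpow_of_nonneg _ _ hβ0.le, ← ENNReal.rpow_mul,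
                  show q * (κ / d) = q * κ / d by ring,
                  show (1:ℝ) - q * κ / d = 1 + -(q * κ / d) by ring,
                  ENNReal.rpow_add _ _ hM0 hMt, ENNReal.rpow_one, ENNReal.rpow_neg,
                  div_eq_mul_inv]
                ring
              _ ≤ c * A ^ (κ / d) * M ^ (1 - q * κ / d) := by
                rw [mul_assoc]
                exact le_mul_of_one_le_left' hc1
          · push_neg at hcase
            have hARd0 : A / R ^ d ≠ 0 := by
              simp [ENNReal.div_eq_zero_iff, hA0, hRdt]
            have hARdt : A / R ^ d ≠ ⊤ := by
              simp [ENNReal.div_eq_top, hAt, hRd0]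
            set L := (A / R ^ d) ^ (1 / q) with hLdef
            have hL0 : L ≠ 0 := rpow_ne_zero _ _ hARd0 hARdt
            have hLt : L ≠ ⊤ := rpow_ne_top _ _ hARd0 hARdt
            set lam := L.toReal with hlamdef
            have hlam0 : 0 < lam := ENNReal.toReal_pos hL0 hLt
            have hofL : ENNReal.ofReal lam = L := ENNReal.ofReal_toReal hLt
            have hsplit : I ≤ R ^ d * L + A * (L ^ (1 - q) * ENNReal.ofReal (1 / (q - 1))) := by
              have hsub : Ioi (0:ℝ) ⊆ Ioc 0 lam ∪ Ioi lam := by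
                intro t ht
                rcases le_or_gt t lam with h | h
                · exact Or.inl ⟨ht, h⟩
                · exact Or.inr h
              have part1 : ∫⁻ t in Ioc (0:ℝ) lam,
                  hContent n d {y | y ∈ ball x r ∧ ENNReal.ofReal t < (f y).abs} ≤
                    R ^ d * L := by
                calc ∫⁻ t in Ioc (0:ℝ) lam,
                    hContent n d {y | y ∈ ball x r ∧ ENNReal.ofReal t < (f y).abs}
                    ≤ ∫⁻ _ in Ioc (0:ℝ) lam, R ^ d := by
                      refine setLIntegral_mono' measurableSet_Ioc fun t ht => ?_
                      exact le_trans (hContent_mono fun y hy => hy.1) (le_of_eq (hball r hr))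
                  _ = R ^ d * ENNReal.ofReal lam := by
                      rw [setLIntegral_const, Real.volume_Ioc, sub_zero]
                  _ = R ^ d * L := by rw [hofL]
              have part2 : ∫⁻ t in Ioi lam,
                  hContent n d {y | y ∈ ball x r ∧ ENNReal.ofReal t < (f y).abs} ≤
                    A * (L ^ (1 - q) * ENNReal.ofReal (1 / (q - 1))) := by
                have step1 : ∫⁻ t in Ioi lam,
                    hContent n d {y | y ∈ ball x r ∧ ENNReal.ofReal t < (f y).abs} ≤
                      ∫⁻ t in Ioi lam, A * ENNReal.ofReal (t ^ (-q)) := by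
                  refine setLIntegral_mono' measurableSet_Ioi fun t ht => ?_
                  have ht0 : 0 < t := lt_trans hlam0 ht
                  have hofq0 : ENNReal.ofReal (t ^ q) ≠ 0 := by
                    simp only [ne_eq, ENNReal.ofReal_eq_zero, not_le]
                    exact Real.rpow_pos_of_pos ht0 q
                  have h2 : hContent n d {y | ENNReal.ofReal t < (f y).abs} ≤
                      A / ENNReal.ofReal (t ^ q) := by
                    refine (ENNReal.le_div_iff_mul_le (Or.inl hofq0)
                      (Or.inl ENNReal.ofReal_ne_top)).2 ?_
                    rw [mul_comm]
                    exact hcheb t ht0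
                  calc hContent n d {y | y ∈ ball x r ∧ ENNReal.ofReal t < (f y).abs}
                      ≤ hContent n d {y | ENNReal.ofReal t < (f y).abs} :=
                        hContent_mono fun y hy => hy.2
                    _ ≤ A / ENNReal.ofReal (t ^ q) := h2
                    _ = A * ENNReal.ofReal (t ^ (-q)) := by
                        rw [div_eq_mul_inv,
                          ← ENNReal.ofReal_inv_of_pos (Real.rpow_pos_of_pos ht0 q),
                          ← Real.rpow_neg ht0.le]
                have step2 : ∫⁻ t in Ioi lam, A * ENNReal.ofReal (t ^ (-q)) =
                    A * ENNReal.ofReal (lam ^ (1 - q) / (q - 1)) := by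
                  rw [lintegral_const_mul' A _ hAt]
                  congr 1
                  have hint : IntegrableOn (fun t : ℝ => t ^ (-q)) (Ioi lam) :=
                    integrableOn_Ioi_rpow_of_lt (by linarith) hlam0
                  have hnn : 0 ≤ᵐ[volume.restrict (Ioi lam)] fun t : ℝ => t ^ (-q) :=
                    (ae_restrict_iff' measurableSet_Ioi).2 (ae_of_all _ fun t ht =>
                      Real.rpow_nonneg (le_of_lt (hlam0.trans ht)) _)
                  rw [← ofReal_integral_eq_lintegral_ofReal hint hnn,
                    integral_Ioi_rpow_of_lt (by linarith) hlam0]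
                  congr 1
                  rw [show -q + 1 = 1 - q by ring,
                    div_eq_div_iff (sub_neg.mpr hq1).ne (sub_pos.mpr hq1).ne']
                  ring
                have step3 : ENNReal.ofReal (lam ^ (1 - q) / (q - 1)) =
                    L ^ (1 - q) * ENNReal.ofReal (1 / (q - 1)) := by
                  rw [div_eq_mul_one_div, ENNReal.ofReal_mul (Real.rpow_nonneg hlam0.le _),
                    show ENNReal.ofReal (lam ^ (1 - q)) = ENNReal.ofReal lam ^ (1 - q) from
                      (ENNReal.ofReal_rpow_of_pos hlam0).symm, hofL]
                calc ∫⁻ t in Ioi lam,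
                    hContent n d {y | y ∈ ball x r ∧ ENNReal.ofReal t < (f y).abs}
                    ≤ ∫⁻ t in Ioi lam, A * ENNReal.ofReal (t ^ (-q)) := step1
                  _ = A * ENNReal.ofReal (lam ^ (1 - q) / (q - 1)) := step2
                  _ = A * (L ^ (1 - q) * ENNReal.ofReal (1 / (q - 1))) := by rw [step3]
              calc I = ∫⁻ t in Ioi (0:ℝ),
                  hContent n d {y | y ∈ ball x r ∧ ENNReal.ofReal t < (f y).abs} := rfl
                _ ≤ ∫⁻ t in Ioc (0:ℝ) lam ∪ Ioi lam,
                    hContent n d {y | y ∈ ball x r ∧ ENNReal.ofReal t < (f y).abs} :=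
                    lintegral_mono_set hsub
                _ ≤ (∫⁻ t in Ioc (0:ℝ) lam,
                    hContent n d {y | y ∈ ball x r ∧ ENNReal.ofReal t < (f y).abs}) +
                    ∫⁻ t in Ioi lam,
                      hContent n d {y | y ∈ ball x r ∧ ENNReal.ofReal t < (f y).abs} :=
                    lintegral_union_le _ _ _
                _ ≤ R ^ d * L + A * (L ^ (1 - q) * ENNReal.ofReal (1 / (q - 1))) :=
                    add_le_add part1 part2
            have hLq : L ^ q = A / R ^ d := by
              rw [hLdef, ← ENNReal.rpow_mul, one_div, inv_mul_cancel₀ hq0.ne',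
                ENNReal.rpow_one]
            have hkey : A * L ^ (1 - q) = L * R ^ d := by
              calc A * L ^ (1 - q) = A * (L * (L ^ q)⁻¹) := by
                    rw [show (1:ℝ) - q = 1 + -q by ring, ENNReal.rpow_add _ _ hL0 hLt,
                      ENNReal.rpow_one, ENNReal.rpow_neg]
                _ = A * (L * (R ^ d / A)) := by
                  rw [hLq, ENNReal.inv_div (Or.inl hRdt) (Or.inl hRd0)]
                _ = L * (A * (R ^ d / A)) := by ring
                _ = L * R ^ d := by rw [ENNReal.mul_div_cancel hA0 hAt]
            have hItot : I ≤ (R ^ d * L) * c := by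
              calc I ≤ R ^ d * L + A * (L ^ (1 - q) * ENNReal.ofReal (1 / (q - 1))) := hsplit
                _ = R ^ d * L + (L * R ^ d) * ENNReal.ofReal (1 / (q - 1)) := by
                  rw [← mul_assoc, hkey]
                _ = (R ^ d * L) * c := by rw [hcdef, mul_add, mul_one]; ring
            have hLval : L = A ^ (1 / q) * (R ^ (d / q))⁻¹ := by
              rw [hLdef, ENNReal.div_rpow_of_nonneg _ _ (by positivity : (0:ℝ) ≤ 1 / q),
                ← ENNReal.rpow_mul, show d * (1 / q) = d / q by ring, div_eq_mul_inv]
            have hstep : R ^ κ * L = A ^ (1 / q) * R ^ (κ - d / q) := by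
              rw [hLval, show κ - d / q = κ + -(d / q) by ring,
                ENNReal.rpow_add _ _ hR0 hRt, ENNReal.rpow_neg]
              ring
            have hγ0 : (κ - d / q) / d ≤ 0 := by
              apply div_nonpos_of_nonpos_of_nonneg _ hd0.le
              have : κ < d / q := by
                rw [lt_div_iff₀ hq0]
                calc κ * q < κ * (d / κ) := by nlinarith
                  _ = d := by field_simp
              linarith
            have hRbound : R ^ (κ - d / q) ≤ (A / M ^ q) ^ ((κ - d / q) / d) := by
              have h1 : A / M ^ q ≤ R ^ d :=
                (ENNReal.div_le_iff_le_mul (Or.inl hMq0) (Or.inl hMqt)).2 hcase.le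
              have h2 := rpow_le_rpow_of_nonpos' h1 hγ0
              calc R ^ (κ - d / q) = (R ^ d) ^ ((κ - d / q) / d) := by
                    rw [← ENNReal.rpow_mul, mul_div_cancel₀ _ hd0.ne']
                _ ≤ (A / M ^ q) ^ ((κ - d / q) / d) := h2
            have hfin : A ^ (1 / q) * (A / M ^ q) ^ ((κ - d / q) / d) =
                A ^ (κ / d) * M ^ (1 - q * κ / d) := by
              have hAM : (A / M ^ q) ^ ((κ - d / q) / d) =
                  A ^ ((κ - d / q) / d) * (M ^ (q * ((κ - d / q) / d)))⁻¹ := by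
                rw [div_eq_mul_inv,
                  ENNReal.mul_rpow_of_ne_top hAt (ENNReal.inv_ne_top.2 hMq0),
                  ENNReal.inv_rpow, ← ENNReal.rpow_mul]
              rw [hAM, ← mul_assoc, ← ENNReal.rpow_add _ _ hA0 hAt,
                show 1 / q + (κ - d / q) / d = κ / d by field_simp; ring,
                show q * ((κ - d / q) / d) = -(1 - q * κ / d) by field_simp; ring,
                ENNReal.rpow_neg, inv_inv]
            have hmain : R ^ κ * L ≤ A ^ (κ / d) * M ^ (1 - q * κ / d) := by
              rw [hstep, ← hfin]
              exact mul_le_mul_right hRbound _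
            calc R ^ (κ - d) * I ≤ R ^ (κ - d) * ((R ^ d * L) * c) :=
                mul_le_mul_right hItot _
              _ = c * (R ^ κ * L) := by
                rw [show R ^ (κ - d) * ((R ^ d * L) * c) = c * ((R ^ (κ - d) * R ^ d) * L)
                    by ring,
                  ← ENNReal.rpow_add _ _ hR0 hRt, sub_add_cancel]
              _ ≤ c * (A ^ (κ / d) * M ^ (1 - q * κ / d)) := mul_le_mul_right hmain c
              _ = c * A ^ (κ / d) * M ^ (1 - q * κ / d) := (mul_assoc _ _ _).symm
end
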